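/- In R = ℂ[s,t,u], let a = s²u + st², b = stu + 2t³, c = t²u + s³, and let A = t²u³ − 2s²t²u, B = −stu³ + s³tu, C = st²u². Then: (1) A·a + B·b + C·c = 0; (2) each of A, B, C lies in the saturation of the ideal I = ⟨a,b,c⟩ with respect to ⟨s,t,u⟩, i.e., for each of A, B, C there exists k such that f·A ∈ I (respectively f·B ∈ I, f·C ∈ I) for every f ∈ ⟨s,t,u⟩^k; and (3) the syzygy (A,B,C) is not a Koszul syzygy: there do not exist h₁, h₂, h₃ ∈ R with A = h₁c + h₂b, B = −h₂a + h₃c, and C = −h₁a − h₃b. -/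
import Mathlib

open MvPolynomial

set_option synthInstance.maxHeartbeats 1000000
set_option maxHeartbeats 1600000

/-- In `R = ℂ[s,t,u]` we write `s = X 0`, `t = X 1`, `u = X 2`. -/
noncomputable def exa : MvPolynomial (Fin 3) ℂ := X 0 ^ 2 * X 2 + X 0 * X 1 ^ 2
/-- `b = stu + 2t³`. -/
noncomputable def exb : MvPolynomial (Fin 3) ℂ := X 0 * X 1 * X 2 + 2 * X 1 ^ 3
/-- `c = t²u + s³`. -/
noncomputable def exc : MvPolynomial (Fin 3) ℂ := X 1 ^ 2 * X 2 + X 0 ^ 3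
/-- `A = t²u³ − 2s²t²u`. -/
noncomputable def exA : MvPolynomial (Fin 3) ℂ :=
  X 1 ^ 2 * X 2 ^ 3 - 2 * X 0 ^ 2 * X 1 ^ 2 * X 2
/-- `B = −stu³ + s³tu`. -/
noncomputable def exB : MvPolynomial (Fin 3) ℂ :=
  -(X 0 * X 1 * X 2 ^ 3) + X 0 ^ 3 * X 1 * X 2
/-- `C = st²u²`. -/
noncomputable def exC : MvPolynomial (Fin 3) ℂ := X 0 * X 1 ^ 2 * X 2 ^ 2

section aux

open TrivSqZeroExt

/-- The evaluation point `s = inl ε`, `t = ε`, `u = 1` in `ℂ[ε'][ε]`. -/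
noncomputable def vv : Fin 3 → DualNumber (DualNumber ℂ) :=
  ![TrivSqZeroExt.inl DualNumber.eps, DualNumber.eps, 1]

lemma key_ne : (inl (DualNumber.eps : DualNumber ℂ) : DualNumber (DualNumber ℂ)) *
    DualNumber.eps ≠ 0 := by
  have h : (inl (DualNumber.eps : DualNumber ℂ) : DualNumber (DualNumber ℂ)) * DualNumber.eps
      = inr DualNumber.eps := by
    have e : (DualNumber.eps : DualNumber (DualNumber ℂ)) = inr 1 := rfl
    rw [e, inl_mul_inr, smul_eq_mul, mul_one]
  rw [h]
  intro hz
  have h1 := congrArg TrivSqZeroExt.snd hz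
  rw [snd_inr, snd_zero] at h1
  have h2 := congrArg TrivSqZeroExt.snd h1
  rw [DualNumber.eps, snd_inr, snd_zero] at h2
  exact one_ne_zero h2

lemma hs2 : (inl (DualNumber.eps : DualNumber ℂ) : DualNumber (DualNumber ℂ)) ^ 2 = 0 := by
  rw [sq, ← inl_mul, DualNumber.eps_mul_eps, inl_zero]

lemma ht2 : (DualNumber.eps : DualNumber (DualNumber ℂ)) ^ 2 = 0 := by
  rw [sq, DualNumber.eps_mul_eps]

lemma hs3 : (inl (DualNumber.eps : DualNumber ℂ) : DualNumber (DualNumber ℂ)) ^ 3 = 0 := by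
  rw [pow_succ, hs2, zero_mul]

lemma aeval_exa : aeval vv exa = 0 := by
  simp only [exa, map_add, map_mul, map_pow, aeval_X, vv]
  simp only [Matrix.cons_val_zero, Matrix.cons_val_one, Matrix.head_cons, Matrix.cons_val_two,
    Matrix.tail_cons]
  rw [hs2, ht2]
  ring

lemma aeval_exc : aeval vv exc = 0 := by
  simp only [exc, map_add, map_mul, map_pow, aeval_X, vv]
  simp only [Matrix.cons_val_zero, Matrix.cons_val_one, Matrix.head_cons, Matrix.cons_val_two,
    Matrix.tail_cons]
  rw [ht2, hs3]
  ring

lemma aeval_exB : aeval vv exB =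
    -(inl (DualNumber.eps : DualNumber ℂ) * (DualNumber.eps : DualNumber (DualNumber ℂ))) := by
  simp only [exB, map_add, map_neg, map_mul, map_pow, aeval_X, vv]
  simp only [Matrix.cons_val_zero, Matrix.cons_val_one, Matrix.head_cons, Matrix.cons_val_two,
    Matrix.tail_cons]
  rw [hs3]
  ring

end aux

lemma mem_abc {p q r : MvPolynomial (Fin 3) ℂ} :
    p * exa + q * exb + r * exc ∈ (Ideal.span {exa, exb, exc} : Ideal (MvPolynomial (Fin 3) ℂ)) := by
  refine Ideal.add_mem _ (Ideal.add_mem _ ?_ ?_) ?_ <;>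
    exact Ideal.mul_mem_left _ _ (Ideal.subset_span (by simp))

theorem example_nonKoszul_syzygy_vanishing_at_basepoints :
    exA * exa + exB * exb + exC * exc = 0 ∧
    (∃ k : ℕ, ∀ f ∈ (Ideal.span {X 0, X 1, X 2} : Ideal (MvPolynomial (Fin 3) ℂ)) ^ k,
      f * exA ∈ (Ideal.span {exa, exb, exc} : Ideal (MvPolynomial (Fin 3) ℂ))) ∧
    (∃ k : ℕ, ∀ f ∈ (Ideal.span {X 0, X 1, X 2} : Ideal (MvPolynomial (Fin 3) ℂ)) ^ k,
      f * exB ∈ (Ideal.span {exa, exb, exc} : Ideal (MvPolynomial (Fin 3) ℂ))) ∧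
    (∃ k : ℕ, ∀ f ∈ (Ideal.span {X 0, X 1, X 2} : Ideal (MvPolynomial (Fin 3) ℂ)) ^ k,
      f * exC ∈ (Ideal.span {exa, exb, exc} : Ideal (MvPolynomial (Fin 3) ℂ))) ∧
    ¬ ∃ h₁ h₂ h₃ : MvPolynomial (Fin 3) ℂ,
      exA = h₁ * exc + h₂ * exb ∧ exB = -h₂ * exa + h₃ * exc ∧
      exC = -h₁ * exa - h₃ * exb := by
  refine ⟨?_, ?_, ?_, ?_, ?_⟩
  · simp only [exA, exB, exC, exa, exb, exc]; ring
  · refine ⟨0, fun f _ => Ideal.mul_mem_left _ f ?_⟩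
    have h : exA = (-(X 0 * X 2) - 2 * X 1 ^ 2) * exa + (X 0 * X 1) * exb + (X 2 ^ 2) * exc := by
      simp only [exA, exa, exb, exc]; ring
    rw [h]; exact mem_abc
  · refine ⟨0, fun f _ => Ideal.mul_mem_left _ f ?_⟩
    have h : exB = (-(2 * X 0 * X 1)) * exa + (X 0 ^ 2 - X 2 ^ 2) * exb + (2 * X 1 * X 2) * exc := by
      simp only [exB, exa, exb, exc]; ring
    rw [h]; exact mem_abc
  · refine ⟨0, fun f _ => Ideal.mul_mem_left _ f ?_⟩
    have h : exC = (-(2 * X 0 ^ 2)) * exa + (-(X 1 * X 2)) * exb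
        + (2 * X 1 ^ 2 + 2 * X 0 * X 2) * exc := by
      simp only [exC, exa, exb, exc]; ring
    rw [h]; exact mem_abc
  · rintro ⟨h₁, h₂, h₃, -, hB, -⟩
    have := congrArg (aeval vv) hB
    rw [aeval_exB, map_add, map_mul, map_mul, map_neg, aeval_exa, aeval_exc, mul_zero, mul_zero,
      add_zero, neg_eq_zero] at this
    exact key_ne this
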